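/- SPO+ loss discrepancy under objective and feasible-set shift: let S_ref, S_cl ⊆ ℝ^d be nonempty compact sets and c_ref, c_cl, ĉ ∈ ℝ^d. Let w⋆_ref ∈ S_ref be a minimizer of w ↦ ⟨c_ref, w⟩ over S_ref and w⋆_cl ∈ S_cl a minimizer of w ↦ ⟨c_cl, w⟩ over S_cl. Define c_d = ‖c_ref − c_cl‖, the shape distance δ_N = inf_{v∈ℝ^d} d_H(S_ref, S_cl + v), D_ref = D(S_ref), D_cl = D(S_cl), D_min = min{D_ref, D_cl}, and H(ĉ) = 2‖ĉ‖(δ_N + D_min) + min{ D_ref·c_d + δ_N(‖c_cl − 2ĉ‖ + ‖c_cl‖), D_cl·c_d + δ_N(‖c_ref − 2ĉ‖ + ‖c_ref‖) }. Then |ℓ_{S_ref}(ĉ, c_ref) − ℓ_{S_cl}(ĉ, c_cl)| ≤ H(ĉ), where the losses are computed with the minimizers w⋆_ref and w⋆_cl respectively. -/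

import Mathlib

open scoped RealInnerProductSpace

/-- Support function of a set `S ⊆ ℝ^d`. -/
noncomputable def supp {d : ℕ} (S : Set (EuclideanSpace ℝ (Fin d)))
    (u : EuclideanSpace ℝ (Fin d)) : ℝ :=
  sSup ((fun w => ⟪u, w⟫) '' S)

/-- Optimal value of the linear program over `S`. -/
noncomputable def zstar {d : ℕ} (S : Set (EuclideanSpace ℝ (Fin d)))
    (c : EuclideanSpace ℝ (Fin d)) : ℝ :=
  sInf ((fun w => ⟪c, w⟫) '' S)

/-- SPO+ loss with a chosen minimizer `w⋆` of `⟨c, ·⟩` over `S`. -/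
noncomputable def spoPlus {d : ℕ} (S : Set (EuclideanSpace ℝ (Fin d)))
    (chat c wstar : EuclideanSpace ℝ (Fin d)) : ℝ :=
  supp S (c - (2 : ℝ) • chat) + 2 * ⟪chat, wstar⟫ - zstar S c

/-- The translate `S + v = {w + v : w ∈ S}`. -/
def setTranslate {d : ℕ} (S : Set (EuclideanSpace ℝ (Fin d)))
    (v : EuclideanSpace ℝ (Fin d)) : Set (EuclideanSpace ℝ (Fin d)) :=
  (fun w => w + v) '' S

/-- Translation-invariant shape distance `δ_N = inf_v d_H(S₁, S₂ + v)`. -/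
noncomputable def shapeDist {d : ℕ}
    (S₁ S₂ : Set (EuclideanSpace ℝ (Fin d))) : ℝ :=
  ⨅ v : EuclideanSpace ℝ (Fin d), Metric.hausdorffDist S₁ (setTranslate S₂ v)


open Metric

variable {d : ℕ} {S A B : Set (EuclideanSpace ℝ (Fin d))} {u c x : EuclideanSpace ℝ (Fin d)}

lemma inner_cont (u : EuclideanSpace ℝ (Fin d)) :
    Continuous fun w : EuclideanSpace ℝ (Fin d) => ⟪u, w⟫ :=
  continuous_const.inner continuous_id

lemma le_supp (hc : IsCompact S) (hx : x ∈ S) (u : EuclideanSpace ℝ (Fin d)) :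
    ⟪u, x⟫ ≤ supp S u :=
  le_csSup (hc.image (inner_cont u)).bddAbove ⟨x, hx, rfl⟩

lemma supp_le (hne : S.Nonempty) {a : ℝ} (h : ∀ x ∈ S, ⟪u, x⟫ ≤ a) : supp S u ≤ a :=
  csSup_le (hne.image _) (by rintro r ⟨x, hx, rfl⟩; exact h x hx)

lemma supp_attained (hne : S.Nonempty) (hc : IsCompact S) (u : EuclideanSpace ℝ (Fin d)) :
    ∃ w ∈ S, supp S u = ⟪u, w⟫ := by
  have := (hc.image (inner_cont u)).sSup_mem (hne.image _)
  obtain ⟨w, hw, h⟩ := this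
  exact ⟨w, hw, h.symm⟩

lemma zstar_le (hc : IsCompact S) (hx : x ∈ S) (c : EuclideanSpace ℝ (Fin d)) :
    zstar S c ≤ ⟪c, x⟫ :=
  csInf_le (hc.image (inner_cont c)).bddBelow ⟨x, hx, rfl⟩

lemma le_zstar (hne : S.Nonempty) {a : ℝ} (h : ∀ x ∈ S, a ≤ ⟪c, x⟫) : a ≤ zstar S c :=
  le_csInf (hne.image _) (by rintro r ⟨x, hx, rfl⟩; exact h x hx)

lemma zstar_attained (hne : S.Nonempty) (hc : IsCompact S) (c : EuclideanSpace ℝ (Fin d)) :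
    ∃ w ∈ S, zstar S c = ⟪c, w⟫ := by
  obtain ⟨w, hw, h⟩ := (hc.image (inner_cont c)).sInf_mem (hne.image _)
  exact ⟨w, hw, h.symm⟩

lemma supp_hdist (hA : A.Nonempty) (hB : B.Nonempty) (hcA : IsCompact A) (hcB : IsCompact B)
    (u : EuclideanSpace ℝ (Fin d)) :
    supp A u ≤ supp B u + ‖u‖ * hausdorffDist A B := by
  have hfin : EMetric.hausdorffEdist A B ≠ ⊤ :=
    hausdorffEdist_ne_top_of_nonempty_of_bounded hA hB hcA.isBounded hcB.isBounded
  refine supp_le hA fun x hx => ?_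
  obtain ⟨b, hb, hdb⟩ := hcB.exists_infDist_eq_dist hB x
  have h1 : dist x b ≤ hausdorffDist A B := hdb ▸ infDist_le_hausdorffDist_of_mem hx hfin
  have h2 : ⟪u, x - b⟫ ≤ ‖u‖ * ‖x - b‖ := real_inner_le_norm u (x - b)
  have h3 : ⟪u, x⟫ = ⟪u, b⟫ + ⟪u, x - b⟫ := by rw [inner_sub_right]; ring
  have h4 : ⟪u, b⟫ ≤ supp B u := le_supp hcB hb u
  have h5 : ‖x - b‖ = dist x b := (dist_eq_norm x b).symm
  have h6 : ‖u‖ * ‖x - b‖ ≤ ‖u‖ * hausdorffDist A B := by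
    rw [h5]; exact mul_le_mul_of_nonneg_left h1 (norm_nonneg u)
  linarith

lemma zstar_hdist (hA : A.Nonempty) (hB : B.Nonempty) (hcA : IsCompact A) (hcB : IsCompact B)
    (c : EuclideanSpace ℝ (Fin d)) :
    zstar B c ≤ zstar A c + ‖c‖ * hausdorffDist A B := by
  have hfin : EMetric.hausdorffEdist A B ≠ ⊤ :=
    hausdorffEdist_ne_top_of_nonempty_of_bounded hA hB hcA.isBounded hcB.isBounded
  obtain ⟨w, hw, hweq⟩ := zstar_attained hA hcA c
  obtain ⟨b, hb, hdb⟩ := hcB.exists_infDist_eq_dist hB w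
  have h1 : dist w b ≤ hausdorffDist A B := hdb ▸ infDist_le_hausdorffDist_of_mem hw hfin
  have h2 : ⟪c, b - w⟫ ≤ ‖c‖ * ‖b - w‖ := real_inner_le_norm c (b - w)
  have h3 : ⟪c, b⟫ = ⟪c, w⟫ + ⟪c, b - w⟫ := by rw [inner_sub_right]; ring
  have h4 : zstar B c ≤ ⟪c, b⟫ := zstar_le hcB hb c
  have h5 : ‖b - w‖ = dist w b := by rw [← dist_eq_norm, dist_comm]
  have h6 : ‖c‖ * ‖b - w‖ ≤ ‖c‖ * hausdorffDist A B := by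
    rw [h5]; exact mul_le_mul_of_nonneg_left h1 (norm_nonneg c)
  linarith

lemma gdiff (hne : S.Nonempty) (hc : IsCompact S) (chat c c' : EuclideanSpace ℝ (Fin d)) :
    (supp S (c - (2:ℝ) • chat) - zstar S c) - (supp S (c' - (2:ℝ) • chat) - zstar S c') ≤
      Metric.diam S * ‖c - c'‖ := by
  obtain ⟨w1, hw1, he1⟩ := supp_attained hne hc (c - (2:ℝ) • chat)
  obtain ⟨w2, hw2, he2⟩ := zstar_attained hne hc c
  have h1 : supp S (c - (2:ℝ) • chat) ≤ supp S (c' - (2:ℝ) • chat) + ⟪c - c', w1⟫ := by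
    have : ⟪c - (2:ℝ) • chat, w1⟫ = ⟪c' - (2:ℝ) • chat, w1⟫ + ⟪c - c', w1⟫ := by
      rw [inner_sub_left, inner_sub_left, inner_sub_left]; ring
    rw [he1, this]
    have := le_supp hc hw1 (c' - (2:ℝ) • chat)
    linarith
  have h2 : zstar S c' ≤ ⟪c', w2⟫ := zstar_le hc hw2 c'
  have h3 : ⟪c, w2⟫ = ⟪c', w2⟫ + ⟪c - c', w2⟫ := by rw [inner_sub_left]; ring
  have h4 : ⟪c - c', w1 - w2⟫ ≤ ‖c - c'‖ * ‖w1 - w2‖ := real_inner_le_norm _ _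
  have h5 : ⟪c - c', w1 - w2⟫ = ⟪c - c', w1⟫ - ⟪c - c', w2⟫ := inner_sub_right _ _ _
  have h6 : ‖w1 - w2‖ ≤ Metric.diam S := by
    rw [← dist_eq_norm]; exact dist_le_diam_of_mem hc.isBounded hw1 hw2
  have h7 : ‖c - c'‖ * ‖w1 - w2‖ ≤ ‖c - c'‖ * Metric.diam S :=
    mul_le_mul_of_nonneg_left h6 (norm_nonneg _)
  have h8 : ‖c - c'‖ * Metric.diam S = Metric.diam S * ‖c - c'‖ := mul_comm _ _
  linarith [he2, h2]

lemma dist_mem_le (hA : A.Nonempty) (hB : B.Nonempty) (hcA : IsCompact A) (hcB : IsCompact B)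
    {wA wB : EuclideanSpace ℝ (Fin d)} (hwA : wA ∈ A) (hwB : wB ∈ B) :
    dist wA wB ≤ hausdorffDist A B + min (Metric.diam A) (Metric.diam B) := by
  have hfin : EMetric.hausdorffEdist A B ≠ ⊤ :=
    hausdorffEdist_ne_top_of_nonempty_of_bounded hA hB hcA.isBounded hcB.isBounded
  have hfin' : EMetric.hausdorffEdist B A ≠ ⊤ := by
    exact hausdorffEdist_ne_top_of_nonempty_of_bounded hB hA hcB.isBounded hcA.isBounded
  obtain ⟨b, hb, hdb⟩ := hcB.exists_infDist_eq_dist hB wA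
  obtain ⟨a, ha, hda⟩ := hcA.exists_infDist_eq_dist hA wB
  have h1 : dist wA b ≤ hausdorffDist A B := hdb ▸ infDist_le_hausdorffDist_of_mem hwA hfin
  have h2 : dist wB a ≤ hausdorffDist A B := by
    rw [hausdorffDist_comm]; exact hda ▸ infDist_le_hausdorffDist_of_mem hwB hfin'
  have h3 : dist wA wB ≤ dist wA b + dist b wB := dist_triangle _ _ _
  have h4 : dist b wB ≤ Metric.diam B := dist_le_diam_of_mem hcB.isBounded hb hwB
  have h5 : dist wA wB ≤ dist wA a + dist a wB := dist_triangle _ _ _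
  have h6 : dist wA a ≤ Metric.diam A := dist_le_diam_of_mem hcA.isBounded hwA ha
  have h7 : dist a wB = dist wB a := dist_comm _ _
  rcases min_cases (Metric.diam A) (Metric.diam B) with ⟨hm, _⟩ | ⟨hm, _⟩ <;> rw [hm] <;> linarith

/-- One-sided bound, grouping the objective-shift term on the first set. -/
lemma oneSideA (hA : A.Nonempty) (hB : B.Nonempty) (hcA : IsCompact A) (hcB : IsCompact B)
    (cref ccl chat : EuclideanSpace ℝ (Fin d))
    {wA wB : EuclideanSpace ℝ (Fin d)} (hwA : wA ∈ A) (hwB : wB ∈ B) :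
    spoPlus A chat cref wA - spoPlus B chat ccl wB ≤
      2 * ‖chat‖ * (hausdorffDist A B + min (Metric.diam A) (Metric.diam B)) +
        (Metric.diam A * ‖cref - ccl‖ +
          hausdorffDist A B * (‖ccl - (2:ℝ) • chat‖ + ‖ccl‖)) := by
  have hT3 := gdiff hA hcA chat cref ccl
  have hT1 := supp_hdist hA hB hcA hcB (ccl - (2:ℝ) • chat)
  have hT2 := zstar_hdist hA hB hcA hcB ccl
  have hinner : ⟪chat, wA - wB⟫ = ⟪chat, wA⟫ - ⟪chat, wB⟫ := inner_sub_right _ _ _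
  have hT4 : ⟪chat, wA - wB⟫ ≤
      ‖chat‖ * (hausdorffDist A B + min (Metric.diam A) (Metric.diam B)) := by
    have h1 : ⟪chat, wA - wB⟫ ≤ ‖chat‖ * ‖wA - wB‖ := real_inner_le_norm _ _
    have h2 : ‖wA - wB‖ = dist wA wB := (dist_eq_norm _ _).symm
    have h3 := dist_mem_le hA hB hcA hcB hwA hwB
    nlinarith [norm_nonneg chat]
  have hring : hausdorffDist A B * (‖ccl - (2:ℝ) • chat‖ + ‖ccl‖) =
      ‖ccl - (2:ℝ) • chat‖ * hausdorffDist A B + ‖ccl‖ * hausdorffDist A B := by ring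
  unfold spoPlus
  linarith

/-- One-sided bound, grouping the objective-shift term on the second set. -/
lemma oneSideB (hA : A.Nonempty) (hB : B.Nonempty) (hcA : IsCompact A) (hcB : IsCompact B)
    (cref ccl chat : EuclideanSpace ℝ (Fin d))
    {wA wB : EuclideanSpace ℝ (Fin d)} (hwA : wA ∈ A) (hwB : wB ∈ B) :
    spoPlus A chat cref wA - spoPlus B chat ccl wB ≤
      2 * ‖chat‖ * (hausdorffDist A B + min (Metric.diam A) (Metric.diam B)) +
        (Metric.diam B * ‖cref - ccl‖ +
          hausdorffDist A B * (‖cref - (2:ℝ) • chat‖ + ‖cref‖)) := by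
  have hT3 := gdiff hB hcB chat cref ccl
  have hT1 := supp_hdist hA hB hcA hcB (cref - (2:ℝ) • chat)
  have hT2 := zstar_hdist hA hB hcA hcB cref
  have hinner : ⟪chat, wA - wB⟫ = ⟪chat, wA⟫ - ⟪chat, wB⟫ := inner_sub_right _ _ _
  have hT4 : ⟪chat, wA - wB⟫ ≤
      ‖chat‖ * (hausdorffDist A B + min (Metric.diam A) (Metric.diam B)) := by
    have h1 : ⟪chat, wA - wB⟫ ≤ ‖chat‖ * ‖wA - wB‖ := real_inner_le_norm _ _
    have h2 : ‖wA - wB‖ = dist wA wB := (dist_eq_norm _ _).symm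
    have h3 := dist_mem_le hA hB hcA hcB hwA hwB
    nlinarith [norm_nonneg chat]
  have hring : hausdorffDist A B * (‖cref - (2:ℝ) • chat‖ + ‖cref‖) =
      ‖cref - (2:ℝ) • chat‖ * hausdorffDist A B + ‖cref‖ * hausdorffDist A B := by ring
  unfold spoPlus
  linarith

/-- Two-sided key bound for a fixed pair of compact sets. -/
lemma key_bound (hA : A.Nonempty) (hB : B.Nonempty) (hcA : IsCompact A) (hcB : IsCompact B)
    (cref ccl chat : EuclideanSpace ℝ (Fin d))
    {wA wB : EuclideanSpace ℝ (Fin d)} (hwA : wA ∈ A) (hwB : wB ∈ B) :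
    |spoPlus A chat cref wA - spoPlus B chat ccl wB| ≤
      2 * ‖chat‖ * (hausdorffDist A B + min (Metric.diam A) (Metric.diam B)) +
      min
        (Metric.diam A * ‖cref - ccl‖ +
          hausdorffDist A B * (‖ccl - (2:ℝ) • chat‖ + ‖ccl‖))
        (Metric.diam B * ‖cref - ccl‖ +
          hausdorffDist A B * (‖cref - (2:ℝ) • chat‖ + ‖cref‖)) := by
  set C := 2 * ‖chat‖ * (hausdorffDist A B + min (Metric.diam A) (Metric.diam B)) with hC
  rw [abs_le]
  constructor
  · -- lower bound: -(C + min) ≤ X, i.e. ℓ_B - ℓ_A ≤ C + min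
    rw [neg_le, neg_sub]
    have hb1 := oneSideB hB hA hcB hcA ccl cref chat hwB hwA
    have hb2 := oneSideA hB hA hcB hcA ccl cref chat hwB hwA
    rw [show hausdorffDist B A = hausdorffDist A B from hausdorffDist_comm,
        min_comm (Metric.diam B), norm_sub_rev ccl cref] at hb1 hb2
    rcases le_total
      (Metric.diam A * ‖cref - ccl‖ + hausdorffDist A B * (‖ccl - (2:ℝ) • chat‖ + ‖ccl‖))
      (Metric.diam B * ‖cref - ccl‖ + hausdorffDist A B * (‖cref - (2:ℝ) • chat‖ + ‖cref‖))
      with hle | hle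
    · rw [min_eq_left hle]; linarith
    · rw [min_eq_right hle]; linarith
  · have hb1 := oneSideA hA hB hcA hcB cref ccl chat hwA hwB
    have hb2 := oneSideB hA hB hcA hcB cref ccl chat hwA hwB
    rcases le_total
      (Metric.diam A * ‖cref - ccl‖ + hausdorffDist A B * (‖ccl - (2:ℝ) • chat‖ + ‖ccl‖))
      (Metric.diam B * ‖cref - ccl‖ + hausdorffDist A B * (‖cref - (2:ℝ) • chat‖ + ‖cref‖))
      with hle | hle
    · rw [min_eq_left hle]; linarith
    · rw [min_eq_right hle]; linarith

lemma supp_translate (hne : S.Nonempty) (hc : IsCompact S) (u v : EuclideanSpace ℝ (Fin d)) :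
    supp (setTranslate S v) u = supp S u + ⟪u, v⟫ := by
  have hcT : IsCompact (setTranslate S v) := hc.image (continuous_id.add continuous_const)
  have hneT : (setTranslate S v).Nonempty := hne.image _
  apply le_antisymm
  · refine supp_le hneT fun x hx => ?_
    obtain ⟨w, hw, rfl⟩ := hx
    have : ⟪u, w + v⟫ = ⟪u, w⟫ + ⟪u, v⟫ := inner_add_right _ _ _
    rw [this]
    have := le_supp hc hw u
    linarith
  · obtain ⟨w, hw, he⟩ := supp_attained hne hc u
    rw [he]
    have hmem : w + v ∈ setTranslate S v := ⟨w, hw, rfl⟩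
    have := le_supp hcT hmem u
    have h2 : ⟪u, w + v⟫ = ⟪u, w⟫ + ⟪u, v⟫ := inner_add_right _ _ _
    linarith
lemma zstar_translate (hne : S.Nonempty) (hc : IsCompact S) (c v : EuclideanSpace ℝ (Fin d)) :
    zstar (setTranslate S v) c = zstar S c + ⟪c, v⟫ := by
  have hcT : IsCompact (setTranslate S v) := hc.image (continuous_id.add continuous_const)
  have hneT : (setTranslate S v).Nonempty := hne.image _
  apply le_antisymm
  · obtain ⟨w, hw, he⟩ := zstar_attained hne hc c
    rw [he]
    have hmem : w + v ∈ setTranslate S v := ⟨w, hw, rfl⟩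
    have := zstar_le hcT hmem c
    have h2 : ⟪c, w + v⟫ = ⟪c, w⟫ + ⟪c, v⟫ := inner_add_right _ _ _
    linarith
  · refine le_zstar hneT fun x hx => ?_
    obtain ⟨w, hw, rfl⟩ := hx
    have h2 : ⟪c, w + v⟫ = ⟪c, w⟫ + ⟪c, v⟫ := inner_add_right _ _ _
    rw [h2]
    have := zstar_le hc hw c
    linarith

lemma spoPlus_translate (hne : S.Nonempty) (hc : IsCompact S)
    (chat c w v : EuclideanSpace ℝ (Fin d)) :
    spoPlus (setTranslate S v) chat c (w + v) = spoPlus S chat c w := by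
  unfold spoPlus
  rw [supp_translate hne hc, zstar_translate hne hc]
  have h1 : ⟪chat, w + v⟫ = ⟪chat, w⟫ + ⟪chat, v⟫ := inner_add_right _ _ _
  have h2 : ⟪c - (2:ℝ) • chat, v⟫ = ⟪c, v⟫ - 2 * ⟪chat, v⟫ := by
    rw [inner_sub_left, real_inner_smul_left]
  rw [h1, h2]
  ring

set_option maxHeartbeats 1000000 in
theorem spoPlus_heterogeneity_bound' {d : ℕ}
    (Sref Scl : Set (EuclideanSpace ℝ (Fin d)))
    (hneref : Sref.Nonempty) (hnecl : Scl.Nonempty)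
    (hcompref : IsCompact Sref) (hcompcl : IsCompact Scl)
    (cref ccl chat : EuclideanSpace ℝ (Fin d))
    (wref : EuclideanSpace ℝ (Fin d)) (hwrefmem : wref ∈ Sref)
    (wcl : EuclideanSpace ℝ (Fin d)) (hwclmem : wcl ∈ Scl) :
    |spoPlus Sref chat cref wref - spoPlus Scl chat ccl wcl| ≤
      2 * ‖chat‖ * (shapeDist Sref Scl + min (Metric.diam Sref) (Metric.diam Scl)) +
      min
        (Metric.diam Sref * ‖cref - ccl‖ +
          shapeDist Sref Scl * (‖ccl - (2 : ℝ) • chat‖ + ‖ccl‖))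
        (Metric.diam Scl * ‖cref - ccl‖ +
          shapeDist Sref Scl * (‖cref - (2 : ℝ) • chat‖ + ‖cref‖)) := by
  set δ := shapeDist Sref Scl with hδdef
  set p := ‖ccl - (2:ℝ) • chat‖ + ‖ccl‖ with hp'
  set q := ‖cref - (2:ℝ) • chat‖ + ‖cref‖ with hq'
  set m := min (Metric.diam Sref) (Metric.diam Scl) with hm'
  have hp : 0 ≤ p := by positivity
  have hq : 0 ≤ q := by positivity
  have hδ0 : 0 ≤ δ := Real.iInf_nonneg fun v => Metric.hausdorffDist_nonneg
  apply le_of_forall_pos_le_add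
  intro ε hε
  set K := 2 * ‖chat‖ + p + q + 1 with hK
  have hK0 : 0 < K := by positivity
  have hε' : 0 < ε / K := div_pos hε hK0
  obtain ⟨v, hv⟩ : ∃ v, hausdorffDist Sref (setTranslate Scl v) < δ + ε / K :=
    exists_lt_of_ciInf_lt (show shapeDist Sref Scl < δ + ε / K by
      rw [← hδdef]; linarith)
  have hneB : (setTranslate Scl v).Nonempty := hnecl.image _
  have hcB : IsCompact (setTranslate Scl v) :=
    hcompcl.image (continuous_id.add continuous_const)
  have hdiam : Metric.diam (setTranslate Scl v) = Metric.diam Scl :=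
    (isometry_add_right v).diam_image Scl
  have hmem : wcl + v ∈ setTranslate Scl v := ⟨wcl, hwclmem, rfl⟩
  have hkey := key_bound hneref hneB hcompref hcB cref ccl chat hwrefmem hmem
  rw [spoPlus_translate hnecl hcompcl, hdiam] at hkey
  refine hkey.trans ?_
  set h := hausdorffDist Sref (setTranslate Scl v) with hh'
  have hh0 : 0 ≤ h := hausdorffDist_nonneg
  have e1 : 2 * ‖chat‖ * (h + m) ≤ 2 * ‖chat‖ * (δ + m) + 2 * ‖chat‖ * (ε / K) := by
    nlinarith [norm_nonneg chat, hv]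
  have ex : Metric.diam Sref * ‖cref - ccl‖ + h * p ≤
      (Metric.diam Sref * ‖cref - ccl‖ + δ * p) + (ε / K) * (p + q) := by
    nlinarith [hv, hp, hq, hε'.le, mul_nonneg hε'.le hq]
  have ey : Metric.diam Scl * ‖cref - ccl‖ + h * q ≤
      (Metric.diam Scl * ‖cref - ccl‖ + δ * q) + (ε / K) * (p + q) := by
    nlinarith [hv, hp, hq, hε'.le, mul_nonneg hε'.le hp]
  have e2 : min (Metric.diam Sref * ‖cref - ccl‖ + h * p)
      (Metric.diam Scl * ‖cref - ccl‖ + h * q) ≤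
      min (Metric.diam Sref * ‖cref - ccl‖ + δ * p)
        (Metric.diam Scl * ‖cref - ccl‖ + δ * q) + (ε / K) * (p + q) := by
    have h12 := min_le_min ex ey
    rwa [min_add_add_right] at h12
  have e3 : (ε / K) * (2 * ‖chat‖ + p + q) ≤ ε := by
    have hcancel : (ε / K) * K = ε := div_mul_cancel₀ ε hK0.ne'
    nlinarith [hε'.le]
  simp only [← hp', ← hq', ← hm']
  linarith [e1, e2, e3]

/-- **SPO+ loss discrepancy under objective and feasible-set shift (Theorem 1).** -/
theorem spoPlus_heterogeneity_bound {d : ℕ}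
    (Sref Scl : Set (EuclideanSpace ℝ (Fin d)))
    (hneref : Sref.Nonempty) (hnecl : Scl.Nonempty)
    (hcompref : IsCompact Sref) (hcompcl : IsCompact Scl)
    (cref ccl chat : EuclideanSpace ℝ (Fin d))
    (wref : EuclideanSpace ℝ (Fin d)) (hwrefmem : wref ∈ Sref)
    (hwrefmin : ∀ w ∈ Sref, ⟪cref, wref⟫ ≤ ⟪cref, w⟫)
    (wcl : EuclideanSpace ℝ (Fin d)) (hwclmem : wcl ∈ Scl)
    (hwclmin : ∀ w ∈ Scl, ⟪ccl, wcl⟫ ≤ ⟪ccl, w⟫) :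
    |spoPlus Sref chat cref wref - spoPlus Scl chat ccl wcl| ≤
      2 * ‖chat‖ * (shapeDist Sref Scl + min (Metric.diam Sref) (Metric.diam Scl)) +
      min
        (Metric.diam Sref * ‖cref - ccl‖ +
          shapeDist Sref Scl * (‖ccl - (2 : ℝ) • chat‖ + ‖ccl‖))
        (Metric.diam Scl * ‖cref - ccl‖ +
          shapeDist Sref Scl * (‖cref - (2 : ℝ) • chat‖ + ‖cref‖)) :=
  spoPlus_heterogeneity_bound' Sref Scl hneref hnecl hcompref hcompcl cref ccl chat
    wref hwrefmem wcl hwclmem
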